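/- H(x) = J(x) - x² J(xq) / ((1-x)(1-xq)), where J(x) = Σ_{n≥0} (-x)^n q^{C(n,2)} / ((q;q)_n (xq;q)_n) and H(x) = Σ_{n≥0} (-x)^n q^{C(n,2)} / ((q;q)_n (x;q)_n). -/

import Mathlib

open PowerSeries

noncomputable section
namespace FC

/-- The field `ℚ(q)` of rational functions in `q`. -/
abbrev K : Type := RatFunc ℚ

/-- The variable `q`. -/
def q : K := RatFunc.X

/-- The q-Pochhammer symbol `(a; q)_n = ∏_{i=0}^{n-1} (1 - a q^i)`. -/
def poch (a : K) (n : ℕ) : K := ∏ i ∈ Finset.range n, (1 - a * q ^ i)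

/-- The power series `(x q^s; q)_n = ∏_{i=0}^{n-1} (1 - q^{s+i} x)` in the variable `x`. -/
def pochX (s n : ℕ) : PowerSeries K :=
  ∏ i ∈ Finset.range n, (1 - PowerSeries.C (q ^ (s + i)) * PowerSeries.X)

/-- `J(x) = Σ_{n≥0} (-x)^n q^{C(n,2)} / ((q;q)_n (xq;q)_n)`, defined coefficientwise:
the coefficient of `x^N` is `Σ_{n=0}^{N} (-1)^n q^{C(n,2)}/(q;q)_n · [x^{N-n}] (xq;q)_n⁻¹`. -/
def J : PowerSeries K :=
  PowerSeries.mk fun N => ∑ n ∈ Finset.range (N + 1),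
    ((-1 : K) ^ n * q ^ n.choose 2 / poch q n) * PowerSeries.coeff (N - n) (pochX 1 n)⁻¹

/-- `H(x) = Σ_{n≥0} (-x)^n q^{C(n,2)} / ((q;q)_n (x;q)_n)`. -/
def H : PowerSeries K :=
  PowerSeries.mk fun N => ∑ n ∈ Finset.range (N + 1),
    ((-1 : K) ^ n * q ^ n.choose 2 / poch q n) * PowerSeries.coeff (N - n) (pochX 0 n)⁻¹

/-- `K(x) = Σ_{n≥0} (x^n q^{n(n+1)/2} / (xq;q)_n) · Σ_{k=0}^n (-1)^k/(q;q)_k`. -/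
def Kq : PowerSeries K :=
  PowerSeries.mk fun N => ∑ n ∈ Finset.range (N + 1),
    (q ^ (n * (n + 1) / 2) * ∑ k ∈ Finset.range (n + 1), (-1 : K) ^ k / poch q k) *
      PowerSeries.coeff (N - n) (pochX 1 n)⁻¹

/-! ### Auxiliary definitions -/

/-- Coefficient `(-1)^n q^{C(n,2)} / (q;q)_n`. -/
def cJ (n : ℕ) : K := (-1 : K) ^ n * q ^ n.choose 2 / poch q n

/-- n-th term of J. -/
def Jt (n : ℕ) : PowerSeries K :=
  PowerSeries.C (cJ n) * (PowerSeries.X ^ n * (pochX 1 n)⁻¹)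

/-- n-th term of H. -/
def Ht (n : ℕ) : PowerSeries K :=
  PowerSeries.C (cJ n) * (PowerSeries.X ^ n * (pochX 0 n)⁻¹)

/-- n-th term of H - J. -/
def Dt (n : ℕ) : PowerSeries K :=
  PowerSeries.C (cJ n * (1 - q ^ n)) * (PowerSeries.X ^ (n + 1) * (pochX 0 (n + 1))⁻¹)

/-- n-th term of x² J(xq). -/
def Rt (n : ℕ) : PowerSeries K :=
  PowerSeries.C (cJ n * q ^ n) * (PowerSeries.X ^ (n + 2) * (pochX 2 n)⁻¹)

/-! ### Basic nonvanishing lemmas -/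

lemma q_pow_ne_one (k : ℕ) (hk : k ≠ 0) : q ^ k ≠ 1 := by
  intro h
  have h1 : (Polynomial.X : Polynomial ℚ) ^ k = 1 := by
    apply RatFunc.algebraMap_injective
    simpa [map_pow, RatFunc.algebraMap_X, q] using h
  have h2 := congrArg Polynomial.natDegree h1
  simp [Polynomial.natDegree_X_pow] at h2
  exact hk h2

lemma one_sub_q_mul_pow_ne_zero (k : ℕ) : (1 : K) - q * q ^ k ≠ 0 := by
  intro h
  have : q ^ (k + 1) = 1 := by rw [pow_succ, mul_comm]; linear_combination -h
  exact q_pow_ne_one (k + 1) (by omega) this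

lemma poch_q_ne_zero (n : ℕ) : poch q n ≠ 0 := by
  unfold poch
  exact Finset.prod_ne_zero_iff.2 fun i _ => one_sub_q_mul_pow_ne_zero i

/-! ### pochX lemmas -/

lemma constCoeff_pochX (s n : ℕ) : constantCoeff (pochX s n) = 1 := by
  unfold pochX
  rw [map_prod]
  simp

lemma pochX_inv_mul (s n : ℕ) : (pochX s n)⁻¹ * pochX s n = 1 :=
  PowerSeries.inv_mul_cancel _ (by rw [constCoeff_pochX]; exact one_ne_zero)

lemma cancel_poch {x y : PowerSeries K} (s n : ℕ)
    (h : x * pochX s n = y * pochX s n) : x = y := by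
  have h2 := congrArg (· * (pochX s n)⁻¹) h
  simpa [mul_assoc, PowerSeries.mul_inv_cancel _
    (show constantCoeff (pochX s n) ≠ 0 by rw [constCoeff_pochX]; exact one_ne_zero)] using h2

lemma rescale_one_sub (a : K) :
    rescale q (1 - PowerSeries.C a * PowerSeries.X)
      = 1 - PowerSeries.C (a * q) * PowerSeries.X := by
  ext k
  simp only [coeff_rescale, map_sub, PowerSeries.coeff_one, coeff_C_mul, PowerSeries.coeff_X]
  rcases k with _ | _ | k <;> simp
  ring

lemma rescale_pochX (s n : ℕ) : rescale q (pochX s n) = pochX (s + 1) n := by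
  unfold pochX
  rw [map_prod]
  apply Finset.prod_congr rfl
  intro i _
  rw [rescale_one_sub, show s + 1 + i = s + i + 1 from by omega, pow_succ]

lemma rescale_pochX_inv (s n : ℕ) :
    rescale q ((pochX s n)⁻¹) = (pochX (s + 1) n)⁻¹ := by
  rw [PowerSeries.eq_inv_iff_mul_eq_one
    (by rw [constCoeff_pochX]; exact one_ne_zero)]
  rw [← rescale_pochX, ← map_mul, pochX_inv_mul, map_one]

lemma coeff_pochX2_inv (n k : ℕ) :
    PowerSeries.coeff k ((pochX 2 n)⁻¹)
      = q ^ k * PowerSeries.coeff k ((pochX 1 n)⁻¹) := by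
  rw [show (2 : ℕ) = 1 + 1 from rfl, ← rescale_pochX_inv, coeff_rescale]

lemma pochX_succ (s n : ℕ) :
    pochX s (n + 1) = pochX s n * (1 - PowerSeries.C (q ^ (s + n)) * PowerSeries.X) :=
  Finset.prod_range_succ _ _

lemma pochX_succ' (s n : ℕ) :
    pochX s (n + 1) = pochX (s + 1) n * (1 - PowerSeries.C (q ^ s) * PowerSeries.X) := by
  unfold pochX
  rw [Finset.prod_range_succ']
  congr 1
  exact Finset.prod_congr rfl fun i _ => by rw [show s + (i + 1) = s + 1 + i from by omega]

/-! ### The key algebraic identity -/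

lemma core (n : ℕ) :
    (pochX 0 n)⁻¹ - (pochX 1 n)⁻¹
      = PowerSeries.C (1 - q ^ n) * PowerSeries.X * (pochX 0 (n + 1))⁻¹ := by
  apply cancel_poch 0 (n + 1)
  have h1 : pochX 0 (n + 1) = pochX 0 n * (1 - PowerSeries.C (q ^ n) * PowerSeries.X) := by
    rw [pochX_succ, zero_add]
  have h2 : pochX 0 (n + 1) = pochX 1 n * (1 - PowerSeries.X) := by
    rw [pochX_succ']
    norm_num
  have e1 : (pochX 0 n)⁻¹ * pochX 0 (n + 1)
      = 1 - PowerSeries.C (q ^ n) * PowerSeries.X := by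
    rw [h1, ← mul_assoc, pochX_inv_mul, one_mul]
  have e2 : (pochX 1 n)⁻¹ * pochX 0 (n + 1) = 1 - PowerSeries.X := by
    rw [h2, ← mul_assoc, pochX_inv_mul, one_mul]
  have e3 : PowerSeries.C (1 - q ^ n) * PowerSeries.X * (pochX 0 (n + 1))⁻¹ * pochX 0 (n + 1)
      = PowerSeries.C (1 - q ^ n) * PowerSeries.X := by
    rw [mul_assoc, pochX_inv_mul, mul_one]
  rw [sub_mul, e1, e2, e3, map_sub, map_one]
  ring

lemma Ht_sub_Jt (n : ℕ) : Ht n - Jt n = Dt n := by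
  unfold Ht Jt Dt
  calc PowerSeries.C (cJ n) * (PowerSeries.X ^ n * (pochX 0 n)⁻¹)
        - PowerSeries.C (cJ n) * (PowerSeries.X ^ n * (pochX 1 n)⁻¹)
      = PowerSeries.C (cJ n) * PowerSeries.X ^ n * ((pochX 0 n)⁻¹ - (pochX 1 n)⁻¹) := by ring
    _ = PowerSeries.C (cJ n) * PowerSeries.X ^ n
          * (PowerSeries.C (1 - q ^ n) * PowerSeries.X * (pochX 0 (n + 1))⁻¹) := by rw [core]
    _ = PowerSeries.C (cJ n * (1 - q ^ n))
          * (PowerSeries.X ^ (n + 1) * (pochX 0 (n + 1))⁻¹) := by rw [map_mul]; ring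

/-! ### Coefficient extraction -/

lemma coeff_term (c : K) (n N : ℕ) (f : PowerSeries K) :
    PowerSeries.coeff N (PowerSeries.C c * (PowerSeries.X ^ n * f))
      = if n ≤ N then c * PowerSeries.coeff (N - n) f else 0 := by
  rw [coeff_C_mul, coeff_X_pow_mul']
  split_ifs <;> simp

lemma coeff_J (N : ℕ) :
    PowerSeries.coeff N J = ∑ n ∈ Finset.range (N + 1), PowerSeries.coeff N (Jt n) := by
  rw [J, coeff_mk]
  refine Finset.sum_congr rfl fun n hn => ?_
  rw [Finset.mem_range] at hn
  rw [Jt, coeff_term, if_pos (by omega)]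
  rfl

lemma coeff_H (N : ℕ) :
    PowerSeries.coeff N H = ∑ n ∈ Finset.range (N + 1), PowerSeries.coeff N (Ht n) := by
  rw [H, coeff_mk]
  refine Finset.sum_congr rfl fun n hn => ?_
  rw [Finset.mem_range] at hn
  rw [Ht, coeff_term, if_pos (by omega)]
  rfl

lemma coeff_HsubJ (N a : ℕ) (ha : a ≤ N) :
    PowerSeries.coeff a (H - J)
      = PowerSeries.coeff a (∑ n ∈ Finset.range (N + 1), Dt n) := by
  rw [map_sub, coeff_H, coeff_J, ← Finset.sum_sub_distrib, map_sum]
  have hstep : ∀ n ∈ Finset.range (a + 1),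
      PowerSeries.coeff a (Ht n) - PowerSeries.coeff a (Jt n)
        = PowerSeries.coeff a (Dt n) := by
    intro n _
    rw [← map_sub, Ht_sub_Jt]
  rw [Finset.sum_congr rfl hstep]
  apply Finset.sum_subset
  · intro x hx
    simp only [Finset.mem_range] at hx ⊢
    omega
  · intro n hn hnot
    simp only [Finset.mem_range] at hn hnot
    rw [Dt, coeff_term, if_neg (by omega)]

/-! ### Multiplying by (1-x)(1-qx) -/

lemma Dt_zero : Dt 0 = 0 := by
  unfold Dt
  simp

lemma pochX_0_factor (m : ℕ) :
    pochX 0 (m + 2) = pochX 2 m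
      * ((1 - PowerSeries.C q * PowerSeries.X) * (1 - PowerSeries.X)) := by
  have h1 := pochX_succ' 0 (m + 1)
  have h2 := pochX_succ' 1 m
  rw [h1, h2]
  norm_num [pow_one]
  ring

lemma inv_poch_mul_P (m : ℕ) :
    (pochX 0 (m + 2))⁻¹ * ((1 - PowerSeries.X) * (1 - PowerSeries.C q * PowerSeries.X))
      = (pochX 2 m)⁻¹ := by
  apply cancel_poch 2 m
  rw [pochX_inv_mul, mul_assoc,
    show (1 - PowerSeries.X) * (1 - PowerSeries.C q * PowerSeries.X) * pochX 2 m
      = pochX 0 (m + 2) from by rw [pochX_0_factor]; ring,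
    pochX_inv_mul]

lemma cJ_succ (m : ℕ) : cJ (m + 1) * (1 - q ^ (m + 1)) = -(cJ m * q ^ m) := by
  unfold cJ
  have hm : poch q (m + 1) = poch q m * (1 - q * q ^ m) := Finset.prod_range_succ _ _
  have h1 : (1 : K) - q * q ^ m ≠ 0 := one_sub_q_mul_pow_ne_zero m
  have h2 : poch q m ≠ 0 := poch_q_ne_zero m
  have hc : (m + 1).choose 2 = m.choose 2 + m := by
    simp [Nat.choose_succ_succ, Nat.choose_one_right, Nat.add_comm]
  rw [hm, hc, pow_add, pow_succ]
  field_simp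
  ring

lemma Dt_mul_P (m : ℕ) :
    Dt (m + 1) * ((1 - PowerSeries.X) * (1 - PowerSeries.C q * PowerSeries.X)) = -Rt m := by
  unfold Dt Rt
  calc PowerSeries.C (cJ (m + 1) * (1 - q ^ (m + 1)))
        * (PowerSeries.X ^ (m + 1 + 1) * (pochX 0 (m + 1 + 1))⁻¹)
        * ((1 - PowerSeries.X) * (1 - PowerSeries.C q * PowerSeries.X))
      = PowerSeries.C (cJ (m + 1) * (1 - q ^ (m + 1)))
        * (PowerSeries.X ^ (m + 2) * ((pochX 0 (m + 2))⁻¹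
          * ((1 - PowerSeries.X) * (1 - PowerSeries.C q * PowerSeries.X)))) := by ring
    _ = PowerSeries.C (cJ (m + 1) * (1 - q ^ (m + 1)))
        * (PowerSeries.X ^ (m + 2) * (pochX 2 m)⁻¹) := by rw [inv_poch_mul_P]
    _ = -(PowerSeries.C (cJ m * q ^ m) * (PowerSeries.X ^ (m + 2) * (pochX 2 m)⁻¹)) := by
        rw [cJ_succ, map_neg]; ring

/-! ### The right-hand side -/

lemma coeff_X2_rescaleJ (N : ℕ) :
    PowerSeries.coeff N (PowerSeries.X ^ 2 * rescale q J)
      = ∑ m ∈ Finset.range N, PowerSeries.coeff N (Rt m) := by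
  rw [coeff_X_pow_mul']
  by_cases hN : 2 ≤ N
  · obtain ⟨M, rfl⟩ : ∃ M, N = M + 2 := ⟨N - 2, by omega⟩
    rw [if_pos hN, coeff_rescale, show M + 2 - 2 = M from by omega, coeff_J]
    rw [Finset.sum_range_succ (fun m => PowerSeries.coeff (M + 2) (Rt m)) (M + 1)]
    rw [show PowerSeries.coeff (M + 2) (Rt (M + 1)) = 0 from by
      rw [Rt, coeff_term, if_neg (by omega)], add_zero]
    rw [Finset.mul_sum]
    refine Finset.sum_congr rfl fun m hm => ?_
    rw [Finset.mem_range] at hm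
    rw [Jt, coeff_term, if_pos (by omega), Rt, coeff_term, if_pos (by omega)]
    rw [show M + 2 - (m + 2) = M - m from by omega, coeff_pochX2_inv]
    rw [show (q : K) ^ M = q ^ m * q ^ (M - m) from by
      rw [← pow_add]; congr 1; omega]
    ring
  · rw [if_neg hN]
    symm
    apply Finset.sum_eq_zero
    intro m _
    rw [Rt, coeff_term, if_neg (by omega)]

/-! ### Main theorem -/

/-- `H(x) = J(x) - x² J(xq) / ((1-x)(1-xq))`. -/
theorem stmt2 :
    H = J - PowerSeries.X ^ 2 * rescale q J *
        ((1 - PowerSeries.X) * (1 - PowerSeries.C q * PowerSeries.X))⁻¹ := by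
  set P : PowerSeries K := (1 - PowerSeries.X) * (1 - PowerSeries.C q * PowerSeries.X)
    with hPdef
  have hP : constantCoeff P ≠ 0 := by
    rw [hPdef]
    simp
  have key : (H - J) * P = -(PowerSeries.X ^ 2 * rescale q J) := by
    ext N
    have step1 : PowerSeries.coeff N ((H - J) * P)
        = PowerSeries.coeff N ((∑ n ∈ Finset.range (N + 1), Dt n) * P) := by
      rw [coeff_mul, coeff_mul]
      refine Finset.sum_congr rfl fun p hp => ?_
      rw [Finset.HasAntidiagonal.mem_antidiagonal] at hp
      rw [coeff_HsubJ N p.1 (by omega)]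
    rw [step1, Finset.sum_mul, Finset.sum_range_succ', Dt_zero, zero_mul, add_zero]
    rw [Finset.sum_congr rfl fun m _ => Dt_mul_P m, map_sum]
    simp only [map_neg]
    rw [Finset.sum_neg_distrib, coeff_X2_rescaleJ]
  have h2 : H - J = -(PowerSeries.X ^ 2 * rescale q J) * P⁻¹ :=
    (PowerSeries.eq_mul_inv_iff_mul_eq hP).2 key
  linear_combination h2

end FC
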